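/- Let 0 < n < 1 and 0 < λ < (2−n)(1−n)/n, and set r₁ = 1 − nλ/((2−n)(1−n)), so r₁ > 0. Let F : ℝ³ → ℝ³ denote the vector field of the (p,q,r) system, i.e. F(p,q,r) = (p((r−1)/λ + 1 − n/(2−n) − λpr − λq/(2−n)), q(1 − λpr − λq/(2−n)) + npr, (r/n)((1−n)(r−1)/λ − 1 + n/(2−n) + λpr + λq/(2−n))). Then the Jacobian matrix of F at the equilibrium M₁ = (0, (2−n)/λ, r₁) has characteristic polynomial (X + 1)(X + n/(1−n))(X − (1−n)r₁/(λn)); it has exactly two strictly negative eigenvalues, −1 and −n/(1−n), and one strictly positive eigenvalue, (1−n)r₁/(λn), so M₁ is a saddle. -/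

import Mathlib

open Polynomial

/-- The vector field of the `(p,q,r)` system (with the third equation solved for `r'`). -/
noncomputable def Fvec (n lam : ℝ) (v : Fin 3 → ℝ) : Fin 3 → ℝ :=
  ![v 0 * ((v 2 - 1) / lam + 1 - n / (2 - n) - lam * v 0 * v 2 - lam * v 1 / (2 - n)),
    v 1 * (1 - lam * v 0 * v 2 - lam * v 1 / (2 - n)) + n * v 0 * v 2,
    (v 2 / n) * ((1 - n) * (v 2 - 1) / lam - 1 + n / (2 - n)
      + lam * v 0 * v 2 + lam * v 1 / (2 - n))]

/-- The Jacobian matrix of the `(p,q,r)` vector field at a point. -/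
noncomputable def Jac (n lam : ℝ) (x : Fin 3 → ℝ) : Matrix (Fin 3) (Fin 3) ℝ :=
  LinearMap.toMatrix' ((fderiv ℝ (Fvec n lam) x : (Fin 3 → ℝ) →L[ℝ] (Fin 3 → ℝ)) :
    (Fin 3 → ℝ) →ₗ[ℝ] (Fin 3 → ℝ))


private lemma HasFDerivAt.divc {f : (Fin 3 → ℝ) → ℝ} {f' : (Fin 3 → ℝ) →L[ℝ] ℝ}
    {x : Fin 3 → ℝ} (h : HasFDerivAt f f' x) (c : ℝ) :
    HasFDerivAt (fun y => f y / c) (c⁻¹ • f') x := by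
  simp only [div_eq_mul_inv]
  simpa using h.mul_const c⁻¹

set_option maxHeartbeats 2000000 in
/-- the equilibrium `M₁` is a saddle, with two strictly negative eigenvalues
`-1`, `-n/(1-n)` and one strictly positive eigenvalue `(1-n)r₁/(λn)`. -/
theorem stmt17 (n lam : ℝ) (hn0 : 0 < n) (hn1 : n < 1) (hlam0 : 0 < lam)
    (hlam1 : lam < (2 - n) * (1 - n) / n)
    (r₁ : ℝ) (hr₁ : r₁ = 1 - n * lam / ((2 - n) * (1 - n))) :
    0 < r₁ ∧
    (Jac n lam ![0, (2 - n) / lam, r₁]).charpoly =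
      (X + C 1) * (X + C (n / (1 - n))) * (X - C ((1 - n) * r₁ / (lam * n))) ∧
    spectrum ℝ (Jac n lam ![0, (2 - n) / lam, r₁]) =
      {-1, -(n / (1 - n)), (1 - n) * r₁ / (lam * n)} ∧
    (-1 : ℝ) < 0 ∧ -(n / (1 - n)) < 0 ∧ 0 < (1 - n) * r₁ / (lam * n) := by
  have h2n : (0:ℝ) < 2 - n := by linarith
  have h1n : (0:ℝ) < 1 - n := by linarith
  have hn : n ≠ 0 := ne_of_gt hn0
  have hl : lam ≠ 0 := ne_of_gt hlam0
  have h2n' : (2:ℝ) - n ≠ 0 := ne_of_gt h2n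
  have h1n' : (1:ℝ) - n ≠ 0 := ne_of_gt h1n
  have hnl : n * lam < (2 - n) * (1 - n) := by
    rw [lt_div_iff₀ hn0] at hlam1; nlinarith
  have hr1pos : 0 < r₁ := by
    rw [hr₁]
    have h : n * lam / ((2 - n) * (1 - n)) < 1 := by
      rw [div_lt_one (by positivity)]; exact hnl
    linarith
  set a : ℝ := n / (1 - n) with ha
  set b : ℝ := (1 - n) * r₁ / (lam * n) with hb
  set A : Matrix (Fin 3) (Fin 3) ℝ :=
    ![![-a, 0, 0], ![-2 * (1 - n) * r₁, -1, 0],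
      ![lam * r₁ ^ 2 / n, lam * r₁ / (n * (2 - n)), b]] with hA
  set x : Fin 3 → ℝ := ![0, (2 - n) / lam, r₁] with hx
  have hp0 : HasFDerivAt (fun v : Fin 3 → ℝ => v 0) (ContinuousLinearMap.proj 0 : (Fin 3 → ℝ) →L[ℝ] ℝ) x :=
    hasFDerivAt_apply 0 x
  have hp1 : HasFDerivAt (fun v : Fin 3 → ℝ => v 1) (ContinuousLinearMap.proj 1 : (Fin 3 → ℝ) →L[ℝ] ℝ) x :=
    hasFDerivAt_apply 1 x
  have hp2 : HasFDerivAt (fun v : Fin 3 → ℝ => v 2) (ContinuousLinearMap.proj 2 : (Fin 3 → ℝ) →L[ℝ] ℝ) x :=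
    hasFDerivAt_apply 2 x
  have hF : HasFDerivAt (Fvec n lam) (LinearMap.toContinuousLinearMap (Matrix.toLin' A)) x := by
    rw [hasFDerivAt_pi']
    intro i
    fin_cases i
    · show HasFDerivAt (fun v : Fin 3 → ℝ =>
        v 0 * ((v 2 - 1) / lam + 1 - n / (2 - n) - lam * v 0 * v 2 - lam * v 1 / (2 - n))) _ x
      refine HasFDerivAt.congr_fderiv
        (hp0.mul (((((hp2.sub_const 1).divc lam).add_const 1).sub_const
          (n / (2 - n))).sub ((hp0.const_mul lam).mul hp2) |>.sub
            ((hp1.const_mul lam).divc (2 - n)))) ?_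
      refine ContinuousLinearMap.ext fun u => ?_
      simp only [ContinuousLinearMap.comp_apply, ContinuousLinearMap.proj_apply,
        LinearMap.coe_toContinuousLinearMap', Matrix.toLin'_apply]
      simp [hx, hA, hr₁, Matrix.toLin'_apply, Matrix.mulVec, dotProduct,
        Fin.sum_univ_three, ha, hb]
      field_simp
      ring
    · show HasFDerivAt (fun v : Fin 3 → ℝ =>
        v 1 * (1 - lam * v 0 * v 2 - lam * v 1 / (2 - n)) + n * v 0 * v 2) _ x
      refine HasFDerivAt.congr_fderiv
        ((hp1.mul ((((hp0.const_mul lam).mul hp2).const_sub 1).sub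
          ((hp1.const_mul lam).divc (2 - n)))).add ((hp0.const_mul n).mul hp2)) ?_
      refine ContinuousLinearMap.ext fun u => ?_
      simp only [ContinuousLinearMap.comp_apply, ContinuousLinearMap.proj_apply,
        LinearMap.coe_toContinuousLinearMap', Matrix.toLin'_apply]
      simp [hx, hA, hr₁, Matrix.toLin'_apply, Matrix.mulVec, dotProduct,
        Fin.sum_univ_three, ha, hb]
      field_simp
      ring
    · show HasFDerivAt (fun v : Fin 3 → ℝ =>
        (v 2 / n) * ((1 - n) * (v 2 - 1) / lam - 1 + n / (2 - n)
          + lam * v 0 * v 2 + lam * v 1 / (2 - n))) _ x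
      refine HasFDerivAt.congr_fderiv
        ((hp2.divc n).mul ((((((hp2.sub_const 1).const_mul (1 - n)).divc
          lam).sub_const 1).add_const (n / (2 - n))).add
            ((hp0.const_mul lam).mul hp2) |>.add ((hp1.const_mul lam).divc (2 - n)))) ?_
      refine ContinuousLinearMap.ext fun u => ?_
      simp only [ContinuousLinearMap.comp_apply, ContinuousLinearMap.proj_apply,
        LinearMap.coe_toContinuousLinearMap', Matrix.toLin'_apply]
      simp [hx, hA, hr₁, Matrix.toLin'_apply, Matrix.mulVec, dotProduct,
        Fin.sum_univ_three, ha, hb]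
      field_simp
      ring
  have hJac : Jac n lam x = A := by
    rw [Jac, hF.fderiv]
    simp [LinearMap.coe_toContinuousLinearMap, LinearMap.toMatrix'_toLin']
  have hcp : A.charpoly = (X + C 1) * (X + C a) * (X - C b) := by
    have h00 : A.charmatrix 0 0 = X + C a := by
      rw [Matrix.charmatrix_apply_eq]
      simp [hA, map_neg, sub_neg_eq_add]
    have h11 : A.charmatrix 1 1 = X + C 1 := by
      rw [Matrix.charmatrix_apply_eq]
      simp [hA, sub_neg_eq_add]
    have h22 : A.charmatrix 2 2 = X - C b := by
      rw [Matrix.charmatrix_apply_eq]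
      simp [hA]
    have h01 : A.charmatrix 0 1 = 0 := by
      rw [Matrix.charmatrix_apply_ne _ _ _ (by decide)]
      simp [hA]
    have h02 : A.charmatrix 0 2 = 0 := by
      rw [Matrix.charmatrix_apply_ne _ _ _ (by decide)]
      simp [hA]
    have h12 : A.charmatrix 1 2 = 0 := by
      rw [Matrix.charmatrix_apply_ne _ _ _ (by decide)]
      simp [hA]
    rw [Matrix.charpoly, Matrix.det_fin_three, h00, h11, h22, h01, h02, h12]
    ring
  have hdet : ∀ μ : ℝ, (algebraMap ℝ (Matrix (Fin 3) (Fin 3) ℝ) μ - A).det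
      = (μ + 1) * (μ + a) * (μ - b) := by
    intro μ
    have s00 : (algebraMap ℝ (Matrix (Fin 3) (Fin 3) ℝ) μ - A) 0 0 = μ + a := by
      rw [Matrix.sub_apply, Matrix.algebraMap_matrix_apply]
      simp [Matrix.sub_apply, Matrix.algebraMap_matrix_apply, hA, sub_neg_eq_add]
    have s11 : (algebraMap ℝ (Matrix (Fin 3) (Fin 3) ℝ) μ - A) 1 1 = μ + 1 := by
      rw [Matrix.sub_apply, Matrix.algebraMap_matrix_apply]
      simp [Matrix.sub_apply, Matrix.algebraMap_matrix_apply, hA, sub_neg_eq_add]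
    have s22 : (algebraMap ℝ (Matrix (Fin 3) (Fin 3) ℝ) μ - A) 2 2 = μ - b := by
      rw [Matrix.sub_apply, Matrix.algebraMap_matrix_apply]
      simp [Matrix.sub_apply, Matrix.algebraMap_matrix_apply, hA]
    have s01 : (algebraMap ℝ (Matrix (Fin 3) (Fin 3) ℝ) μ - A) 0 1 = 0 := by
      rw [Matrix.sub_apply, Matrix.algebraMap_matrix_apply]
      simp [Matrix.sub_apply, Matrix.algebraMap_matrix_apply, hA]
    have s02 : (algebraMap ℝ (Matrix (Fin 3) (Fin 3) ℝ) μ - A) 0 2 = 0 := by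
      rw [Matrix.sub_apply, Matrix.algebraMap_matrix_apply]
      simp [Matrix.sub_apply, Matrix.algebraMap_matrix_apply, hA]
    have s12 : (algebraMap ℝ (Matrix (Fin 3) (Fin 3) ℝ) μ - A) 1 2 = 0 := by
      rw [Matrix.sub_apply, Matrix.algebraMap_matrix_apply]
      simp [Matrix.sub_apply, Matrix.algebraMap_matrix_apply, hA]
    rw [Matrix.det_fin_three, s00, s11, s22, s01, s02, s12]
    ring
  have hspec : spectrum ℝ A = {(-1 : ℝ), -a, b} := by
    ext μ
    rw [spectrum.mem_iff, Matrix.isUnit_iff_isUnit_det, isUnit_iff_ne_zero, not_not, hdet μ]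
    simp [Set.mem_insert_iff, mul_eq_zero, add_eq_zero_iff_eq_neg, sub_eq_zero, or_assoc]
  refine ⟨hr1pos, ?_, ?_, by norm_num, ?_, ?_⟩
  · rw [hJac, hcp]
  · rw [hJac, hspec]
  · have : 0 < a := div_pos hn0 h1n
    linarith
  · exact div_pos (mul_pos h1n hr1pos) (mul_pos hlam0 hn0)
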